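/- Let F ⊂ Y be a subset of a Banach space Y, y ∈ F and u ∈ Y, and let d(x) = dist(x, F). If F is not porous at y in the direction of u and not porous at y in the direction of −u, then d is Hadamard differentiable at y in the direction of u with derivative 0. -/

import Mathlib

open Filter Metric Set

/-- `F` is porous at `y` in the direction `u`: there are `c > 0` and positive
`tₙ → 0` with `B(y + tₙ u, c tₙ) ∩ F = ∅` for all `n`. -/
def PorousAt {Y : Type*} [NormedAddCommGroup Y] [NormedSpace ℝ Y]
    (F : Set Y) (y u : Y) : Prop :=
  ∃ c > (0 : ℝ), ∃ t : ℕ → ℝ, (∀ n, 0 < t n) ∧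
    Filter.Tendsto t Filter.atTop (nhds 0) ∧
    ∀ n, Metric.ball (y + t n • u) (c * t n) ∩ F = ∅

/-- `z` is a Hadamard derivative of `f` (with domain `F`) at `y` in the direction `u`:
for all sequences `tₙ → 0`, `tₙ ≠ 0`, `uₙ → u` with `y + tₙ • uₙ ∈ F`, the
difference quotients converge to `z`. -/
def HadamardDerivAt {Y Z : Type*} [NormedAddCommGroup Y] [NormedSpace ℝ Y]
    [NormedAddCommGroup Z] [NormedSpace ℝ Z]
    (f : Y → Z) (F : Set Y) (y u : Y) (z : Z) : Prop :=
  ∀ (t : ℕ → ℝ) (v : ℕ → Y), (∀ n, t n ≠ 0) →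
    Filter.Tendsto t Filter.atTop (nhds 0) →
    Filter.Tendsto v Filter.atTop (nhds u) →
    (∀ n, y + t n • v n ∈ F) →
    Filter.Tendsto (fun n => (t n)⁻¹ • (f (y + t n • v n) - f y))
      Filter.atTop (nhds z)

theorem stmt_4 {Y : Type*} [NormedAddCommGroup Y] [NormedSpace ℝ Y] [CompleteSpace Y]
    (F : Set Y) (y u : Y) (hy : y ∈ F)
    (h1 : ¬ PorousAt F y u) (h2 : ¬ PorousAt F y (-u)) :
    HadamardDerivAt (fun x => Metric.infDist x F) Set.univ y u (0 : ℝ) := by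
  intro t v ht htend hvtend _
  have hdy : Metric.infDist y F = 0 := Metric.infDist_zero_of_mem hy
  set q : ℕ → ℝ := fun n => Metric.infDist (y + t n • v n) F / |t n| with hqdef
  have hq0 : ∀ n, 0 ≤ q n := fun n => div_nonneg Metric.infDist_nonneg (abs_nonneg _)
  have key : Tendsto q atTop (nhds 0) := by
    by_contra hq
    rw [NormedAddCommGroup.tendsto_nhds_zero] at hq
    push_neg at hq
    obtain ⟨ε, hε, hfr⟩ := hq
    have hfr' : ∃ᶠ n in atTop, ε ≤ q n := hfr.mono (fun n hn => by
      have := hn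
      rwa [Real.norm_eq_abs, abs_of_nonneg (hq0 n)] at this)
    have hv2 : ∀ᶠ n in atTop, ‖v n - u‖ < ε / 2 := by
      have h := tendsto_sub_nhds_zero_iff.mpr hvtend
      exact (NormedAddCommGroup.tendsto_nhds_zero.mp h) (ε / 2) (by positivity)
    have hfr2 := hfr'.and_eventually hv2
    have hsplit : (∃ᶠ n in atTop, (ε ≤ q n ∧ ‖v n - u‖ < ε / 2) ∧ 0 < t n)
        ∨ (∃ᶠ n in atTop, (ε ≤ q n ∧ ‖v n - u‖ < ε / 2) ∧ t n < 0) := by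
      rw [← Filter.frequently_or_distrib]
      refine hfr2.mono fun n hn => ?_
      rcases (ht n).lt_or_gt with h | h
      · exact Or.inr ⟨hn, h⟩
      · exact Or.inl ⟨hn, h⟩
    rcases hsplit with hpos | hneg
    · obtain ⟨φ, hφ, hP⟩ := Filter.extraction_of_frequently_atTop hpos
      apply h1
      refine ⟨ε / 2, by positivity, fun n => t (φ n), fun n => (hP n).2,
        htend.comp hφ.tendsto_atTop, fun n => ?_⟩
      rw [Set.eq_empty_iff_forall_notMem]
      rintro x ⟨hx1, hx2⟩
      set s := t (φ n) with hs
      have hspos : 0 < s := (hP n).2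
      have hle : Metric.infDist (y + s • v (φ n)) F ≤ dist (y + s • v (φ n)) x :=
        Metric.infDist_le_dist_of_mem hx2
      have htri : dist (y + s • v (φ n)) x ≤
          dist (y + s • v (φ n)) (y + s • u) + dist (y + s • u) x := dist_triangle _ _ _
      have hd1 : dist (y + s • v (φ n)) (y + s • u) = s * ‖v (φ n) - u‖ := by
        rw [dist_eq_norm]
        have : (y + s • v (φ n)) - (y + s • u) = s • (v (φ n) - u) := by
          rw [smul_sub]; abel
        rw [this, norm_smul, Real.norm_eq_abs, abs_of_pos hspos]
      have hd2 : dist (y + s • u) x < ε / 2 * s := by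
        rw [dist_comm]; exact Metric.mem_ball.mp hx1
      have hlow : ε * s ≤ Metric.infDist (y + s • v (φ n)) F := by
        have := (hP n).1.1
        rw [hqdef] at this
        have h' := (le_div_iff₀ (abs_pos.mpr hspos.ne')).mp this
        rwa [abs_of_pos hspos] at h'
      have hnv : ‖v (φ n) - u‖ < ε / 2 := (hP n).1.2
      nlinarith [norm_nonneg (v (φ n) - u)]
    · obtain ⟨φ, hφ, hP⟩ := Filter.extraction_of_frequently_atTop hneg
      apply h2
      refine ⟨ε / 2, by positivity, fun n => -t (φ n), fun n => neg_pos.mpr (hP n).2,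
        (htend.comp hφ.tendsto_atTop).neg.congr' (by simp) |>.mono_right (by simp), fun n => ?_⟩
      rw [Set.eq_empty_iff_forall_notMem]
      rintro x ⟨hx1, hx2⟩
      set s := -t (φ n) with hs
      have hspos : 0 < s := neg_pos.mpr (hP n).2
      have hle : Metric.infDist (y + t (φ n) • v (φ n)) F ≤ dist (y + t (φ n) • v (φ n)) x :=
        Metric.infDist_le_dist_of_mem hx2
      have htri : dist (y + t (φ n) • v (φ n)) x ≤
          dist (y + t (φ n) • v (φ n)) (y + s • -u) + dist (y + s • -u) x := dist_triangle _ _ _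
      have hd1 : dist (y + t (φ n) • v (φ n)) (y + s • -u) = s * ‖v (φ n) - u‖ := by
        rw [dist_eq_norm]
        have : (y + t (φ n) • v (φ n)) - (y + s • -u) = s • (u - v (φ n)) := by
          rw [hs]; module
        rw [this, norm_smul, Real.norm_eq_abs, abs_of_pos hspos, norm_sub_rev]
      have hd2 : dist (y + s • -u) x < ε / 2 * s := by
        rw [dist_comm]; exact Metric.mem_ball.mp hx1
      have hlow : ε * s ≤ Metric.infDist (y + t (φ n) • v (φ n)) F := by
        have := (hP n).1.1
        rw [hqdef] at this
        have habs : |t (φ n)| = s := by rw [abs_of_neg (hP n).2]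
        have h' := (le_div_iff₀ (by rw [habs]; exact hspos)).mp this
        rwa [habs] at h'
      have hnv : ‖v (φ n) - u‖ < ε / 2 := (hP n).1.2
      nlinarith [norm_nonneg (v (φ n) - u)]
  simp only [hdy, sub_zero]
  refine squeeze_zero_norm (fun n => le_of_eq ?_) key
  rw [norm_smul, Real.norm_eq_abs, abs_inv, Real.norm_eq_abs,
    abs_of_nonneg Metric.infDist_nonneg, hqdef]
  simp [div_eq_inv_mul]
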